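/- Suppose X ≥ 0 solves the algebraic Riccati equation A^T X + X A − X B B^T X + Q = 0 with Q positive semidefinite, and let F = B^T X with A − BF Hurwitz. Then the transfer matrix T_F(s) = F(sI − A + BF)^{-1} B is positive real, i.e., T_F(s) + T_F(s)^* ≥ 0 for all s with Re(s) > 0. -/

import Mathlib

open Matrix ComplexOrder

/-- All eigenvalues (over ℂ) have negative real part. -/
def Hurwitz {n : Type*} [Fintype n] [DecidableEq n] (M : Matrix n n ℝ) : Prop :=
  ∀ μ ∈ spectrum ℂ (M.map Complex.ofReal), μ.re < 0

private lemma mapC_mul {k l p : Type*} [Fintype l] (M : Matrix k l ℝ) (N : Matrix l p ℝ) :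
    (M * N).map Complex.ofReal = M.map Complex.ofReal * N.map Complex.ofReal := by
  ext i j; simp [mul_apply]

private lemma mapC_sub {k l : Type*} (M N : Matrix k l ℝ) :
    (M - N).map Complex.ofReal = M.map Complex.ofReal - N.map Complex.ofReal := by
  ext i j; simp

private lemma mapC_neg {k l : Type*} (M : Matrix k l ℝ) :
    (-M).map Complex.ofReal = -(M.map Complex.ofReal) := by
  ext i j; simp

private lemma mapC_add {k l : Type*} (M N : Matrix k l ℝ) :
    (M + N).map Complex.ofReal = M.map Complex.ofReal + N.map Complex.ofReal := by
  ext i j; simp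

private lemma ct_map {k l : Type*} (M : Matrix k l ℝ) :
    (M.map Complex.ofReal)ᴴ = Mᵀ.map Complex.ofReal := by
  ext i j; simp [conjTranspose_apply, Complex.conj_ofReal]

private lemma psd_map {k : Type*} [Fintype k] [DecidableEq k] {X : Matrix k k ℝ}
    (hX : X.PosSemidef) : (X.map Complex.ofReal).PosSemidef := by
  obtain ⟨C, hC⟩ : ∃ C : Matrix k k ℝ, X = Cᵀ * C := by
    open scoped MatrixOrder in
    obtain ⟨C, hC⟩ := CStarAlgebra.nonneg_iff_eq_star_mul_self.mp hX.nonneg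
    exact ⟨C, by rw [hC, star_eq_conjTranspose, conjTranspose_eq_transpose_of_trivial]⟩
  have h2 : X.map Complex.ofReal = (C.map Complex.ofReal)ᴴ * C.map Complex.ofReal := by
    ext i j
    simp [hC, mul_apply, conjTranspose_apply, Complex.conj_ofReal]
  rw [h2]
  exact Matrix.posSemidef_conjTranspose_mul_self _

private lemma psd_smulC {k : Type*} [Fintype k] {c : ℂ} (hc : 0 ≤ c) {A : Matrix k k ℂ}
    (hA : A.PosSemidef) : (c • A).PosSemidef := by
  have hcr : star c = c := by
    rw [Complex.star_def, Complex.conj_eq_iff_im]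
    exact ((Complex.le_def.mp hc).2).symm
  refine ⟨?_, fun x => ?_⟩
  · unfold Matrix.IsHermitian
    rw [conjTranspose_smul, hA.1.eq, hcr]
  · exact (hA.smul hc).2 x

/-- If X ≥ 0 solves the ARE AᵀX + XA − XBBᵀX + Q = 0 with Q ≥ 0,
F = BᵀX and A − BF Hurwitz, then T_F(s) = F(sI − A + BF)⁻¹B is positive real:
T_F(s) + T_F(s)* ≥ 0 for all s with Re(s) > 0. -/
theorem stmt6 {n m : ℕ} (A : Matrix (Fin n) (Fin n) ℝ) (B : Matrix (Fin n) (Fin m) ℝ)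
    (Q X : Matrix (Fin n) (Fin n) ℝ) (hQ : Q.PosSemidef) (hX : X.PosSemidef)
    (hare : Aᵀ * X + X * A - X * B * Bᵀ * X + Q = 0)
    (F : Matrix (Fin m) (Fin n) ℝ) (hF : F = Bᵀ * X)
    (hH : Hurwitz (A - B * F)) :
    ∀ s : ℂ, 0 < s.re →
      ((F.map Complex.ofReal *
          (s • (1 : Matrix (Fin n) (Fin n) ℂ) - A.map Complex.ofReal +
            B.map Complex.ofReal * F.map Complex.ofReal)⁻¹ * B.map Complex.ofReal) +
        (F.map Complex.ofReal *
          (s • (1 : Matrix (Fin n) (Fin n) ℂ) - A.map Complex.ofReal +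
            B.map Complex.ofReal * F.map Complex.ofReal)⁻¹ * B.map Complex.ofReal)ᴴ).PosSemidef := by
  intro s hs
  have hXt : Xᵀ = X := by
    ext i j
    simpa [conjTranspose_apply] using congrFun (congrFun hX.1 i) j
  -- real Lyapunov identity
  have key : (A - B*F)ᵀ * X + X * (A - B*F) + (Q + Fᵀ*F)
      = Aᵀ * X + X * A - X * B * Bᵀ * X + Q := by
    subst hF
    simp only [transpose_sub, transpose_mul, transpose_transpose, hXt, Matrix.sub_mul,
      Matrix.mul_sub, Matrix.mul_assoc]
    abel
  have hlyap : (A - B*F)ᵀ * X + X * (A - B*F) = -(Q + Fᵀ*F) :=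
    eq_neg_of_add_eq_zero_left (key.trans hare)
  set Ac := A.map Complex.ofReal with hAc
  set Bc := B.map Complex.ofReal with hBc
  set Fc := F.map Complex.ofReal with hFcdef
  set Xc := X.map Complex.ofReal with hXc
  set Qc := Q.map Complex.ofReal with hQc
  set M : Matrix (Fin n) (Fin n) ℂ := s • 1 - Ac + Bc * Fc with hMdef
  -- invertibility of M
  have hsnot : s ∉ spectrum ℂ ((A - B*F).map Complex.ofReal) := fun h => by
    have := hH s h; linarith
  have hunit : IsUnit (s • (1 : Matrix (Fin n) (Fin n) ℂ) - (A - B*F).map Complex.ofReal) := by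
    have := spectrum.notMem_iff.mp hsnot
    rwa [Algebra.algebraMap_eq_smul_one] at this
  have hMeq : M = s • (1 : Matrix (Fin n) (Fin n) ℂ) - (A - B*F).map Complex.ofReal := by
    rw [hMdef, hAc, hBc, hFcdef, mapC_sub, mapC_mul]
    noncomm_ring
  have hdet : IsUnit M.det := (Matrix.isUnit_iff_isUnit_det M).mp (hMeq ▸ hunit)
  have hMr : M * M⁻¹ = 1 := Matrix.mul_nonsing_inv M hdet
  have h1' : ∀ Z : Matrix (Fin n) (Fin m) ℂ, M⁻¹ᴴ * (Mᴴ * Z) = Z := fun Z => by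
    rw [← Matrix.mul_assoc, ← conjTranspose_mul, hMr, conjTranspose_one, Matrix.one_mul]
  have h2' : ∀ Z : Matrix (Fin n) (Fin m) ℂ, M * (M⁻¹ * Z) = Z := fun Z => by
    rw [← Matrix.mul_assoc, hMr, Matrix.one_mul]
  have hXcH : Xcᴴ = Xc := (psd_map hX).1
  have hFc : Fc = Bcᴴ * Xc := by
    rw [hFcdef, hBc, hXc, hF, mapC_mul, ct_map]
  -- complexified Lyapunov
  have hlyapC : (A - B*F)ᵀ.map Complex.ofReal * Xc + Xc * (A - B*F).map Complex.ofReal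
      = -(Qc + Fᵀ.map Complex.ofReal * Fc) := by
    rw [hXc, hQc, hFcdef, ← mapC_mul, ← mapC_mul, ← mapC_add, ← mapC_mul, ← mapC_add,
      ← mapC_neg, hlyap]
  -- expansion of Mᴴ Xc + Xc M
  have expand : Mᴴ * Xc + Xc * M
      = star s • Xc + s • Xc
        - ((A - B*F)ᵀ.map Complex.ofReal * Xc + Xc * (A - B*F).map Complex.ofReal) := by
    rw [hMdef, hAc, hBc, hFcdef, hXc]
    simp only [transpose_sub, transpose_mul, mapC_sub, mapC_mul, conjTranspose_sub,
      conjTranspose_add, conjTranspose_smul, conjTranspose_one, conjTranspose_mul, ct_map,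
      Matrix.sub_mul, Matrix.add_mul, Matrix.mul_sub, Matrix.mul_add, Matrix.smul_mul,
      Matrix.mul_smul, Matrix.one_mul, Matrix.mul_one]
    abel
  have hP : Mᴴ * Xc + Xc * M
      = ((2 * s.re : ℝ) : ℂ) • Xc + (Qc + Fᵀ.map Complex.ofReal * Fc) := by
    rw [expand, hlyapC, sub_neg_eq_add, ← add_smul, add_comm (star s) s, Complex.star_def,
      Complex.add_conj]
  have hPpsd : (Mᴴ * Xc + Xc * M).PosSemidef := by
    rw [hP]
    refine (psd_smulC (Complex.zero_le_real.mpr (by positivity)) (psd_map hX)).add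
      ((psd_map hQ).add ?_)
    rw [hFcdef, ← ct_map]
    exact Matrix.posSemidef_conjTranspose_mul_self _
  -- sandwich identity
  have hsand : Fc * M⁻¹ * Bc + (Fc * M⁻¹ * Bc)ᴴ
      = (M⁻¹ * Bc)ᴴ * (Mᴴ * Xc + Xc * M) * (M⁻¹ * Bc) := by
    rw [hFc]
    simp only [conjTranspose_mul, conjTranspose_conjTranspose, hXcH, Matrix.add_mul,
      Matrix.mul_add, Matrix.mul_assoc, h1', h2']
  rw [hsand]
  exact hPpsd.conjTranspose_mul_mul_same _
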